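/- Let ε ∈ (0,1], δ > 0, B > 0, p_fail ∈ (0,1), and set c = 3 ln(2/p_fail) and w = ⌈c B/(ε² δ)⌉. Let X_1, ..., X_w be independent, identically distributed real random variables on a probability space, each taking values in [0, B], with common mean μ = E[X_1], and let X̄ = (1/w) Σ_{i=1}^w X_i. Then P[ |X̄ − μ| > max(ε μ, 2e δ) ] ≤ p_fail. -/

import Mathlib

open MeasureTheory ProbabilityTheory Real

lemma aux_log_lower {x : ℝ} (hx : 0 ≤ x) : 2*x/(2+x) ≤ Real.log (1+x) := by
  set g : ℝ → ℝ := fun t => (2+t) * Real.log (1+t) - 2*t with hg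
  have hderiv : ∀ t ∈ Set.Ioi (0:ℝ), HasDerivAt g (Real.log (1+t) + (2+t)/(1+t) - 2) t := by
    intro t ht
    have h1t : (0:ℝ) < 1 + t := by have := Set.mem_Ioi.mp ht; linarith
    have hlog : HasDerivAt (fun t : ℝ => Real.log (1+t)) (1/(1+t)) t := by
      have := (Real.hasDerivAt_log h1t.ne').comp t ((hasDerivAt_id t).const_add 1)
      simpa [one_div, Function.comp_def] using this
    have hmul : HasDerivAt (fun t : ℝ => (2+t) * Real.log (1+t))
        (1 * Real.log (1+t) + (2+t) * (1/(1+t))) t :=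
      ((hasDerivAt_id t).const_add 2).mul hlog
    have hd := hmul.sub ((hasDerivAt_id t).const_mul 2)
    exact hd.congr_deriv (by ring)
  have hmono : MonotoneOn g (Set.Ici (0:ℝ)) := by
    have hcont : ContinuousOn g (Set.Ici (0:ℝ)) := by
      apply ContinuousOn.sub
      · apply ContinuousOn.mul (by fun_prop)
        apply ContinuousOn.log (by fun_prop)
        intro t ht
        have := Set.mem_Ici.mp ht; positivity
      · fun_prop
    apply monotoneOn_of_deriv_nonneg (convex_Ici 0) hcont
    · intro t ht
      rw [interior_Ici] at ht
      exact (hderiv t ht).differentiableAt.differentiableWithinAt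
    · intro t ht
      rw [interior_Ici] at ht
      rw [(hderiv t ht).deriv]
      have ht0 : (0:ℝ) < t := ht
      have h1t : (0:ℝ) < 1 + t := by linarith
      have hl : Real.log ((1+t)⁻¹) ≤ (1+t)⁻¹ - 1 := Real.log_le_sub_one_of_pos (by positivity)
      rw [Real.log_inv] at hl
      have h2 : (2+t)/(1+t) = 2 - t/(1+t) := by field_simp; ring
      have h3 : (1+t)⁻¹ - 1 = -(t/(1+t)) := by field_simp; ring
      rw [h2]
      have : t/(1+t) ≤ Real.log (1+t) := by rw [h3] at hl; linarith
      linarith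
  have h0 : g 0 = 0 := by simp [hg]
  have := hmono (Set.self_mem_Ici) (Set.mem_Ici.mpr hx) hx
  rw [h0] at this
  rw [div_le_iff₀ (by linarith : (0:ℝ) < 2 + x)]
  simp only [hg] at this
  nlinarith

lemma aux_log_upper {t : ℝ} (ht : 1 ≤ t) : Real.log t ≤ (t - 1/t)/2 := by
  set g : ℝ → ℝ := fun y => (y - 1/y)/2 - Real.log y with hg
  have hderiv : ∀ y ∈ Set.Ioi (1:ℝ), HasDerivAt g ((1 + 1/y^2)/2 - 1/y) y := by
    intro y hy
    have hy0 : (0:ℝ) < y := by have := Set.mem_Ioi.mp hy; linarith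
    have hinv : HasDerivAt (fun y : ℝ => 1/y) (-(1/y^2)) y := by
      simpa [one_div, sq] using (hasDerivAt_inv hy0.ne')
    have h1 : HasDerivAt (fun y : ℝ => (y - 1/y)/2) ((1 - -(1/y^2))/2) y :=
      ((hasDerivAt_id y).sub hinv).div_const 2
    have hd := h1.sub (Real.hasDerivAt_log hy0.ne')
    exact hd.congr_deriv (by ring)
  have hmono : MonotoneOn g (Set.Ici (1:ℝ)) := by
    have hcont : ContinuousOn g (Set.Ici (1:ℝ)) := by
      apply ContinuousOn.sub
      · apply ContinuousOn.div_const
        apply ContinuousOn.sub (by fun_prop)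
        exact continuousOn_const.div continuousOn_id (fun y hy => by
          have := Set.mem_Ici.mp hy; positivity)
      · exact Real.continuousOn_log.mono (fun y hy => by
          have := Set.mem_Ici.mp hy; simp; positivity)
    apply monotoneOn_of_deriv_nonneg (convex_Ici 1) hcont
    · intro y hy
      rw [interior_Ici] at hy
      exact (hderiv y hy).differentiableAt.differentiableWithinAt
    · intro y hy
      rw [interior_Ici] at hy
      rw [(hderiv y hy).deriv]
      have hy0 : (0:ℝ) < y := by have := Set.mem_Ioi.mp hy; linarith
      have h1 : (1 + 1/y^2)/2 - 1/y = (y-1)^2/(2*y^2) := by field_simp; ring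
      rw [h1]; positivity
  have h1 : g 1 = 0 := by simp [hg]
  have := hmono (Set.self_mem_Ici) (Set.mem_Ici.mpr ht) ht
  rw [h1] at this
  simp only [hg] at this
  linarith


lemma aux_K1 {ε : ℝ} (h0 : 0 ≤ ε) (h1 : ε ≤ 1) :
    ε - (1+ε) * Real.log (1+ε) ≤ -(ε^2/3) := by
  have h := aux_log_lower h0
  have h2 : (1+ε) * (2*ε/(2+ε)) ≤ (1+ε) * Real.log (1+ε) :=
    mul_le_mul_of_nonneg_left h (by linarith)
  have h3 : ε - (1+ε) * (2*ε/(2+ε)) = -(ε^2/(2+ε)) := by field_simp; ring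
  have h4 : ε^2/3 ≤ ε^2/(2+ε) := by gcongr <;> linarith
  linarith

lemma aux_K2 {ε : ℝ} (h0 : 0 ≤ ε) (h1 : ε < 1) :
    -((1-ε) * Real.log (1-ε)) - ε ≤ -(ε^2/3) := by
  have he : (0:ℝ) < 1 - ε := by linarith
  have h := aux_log_upper (t := (1-ε)⁻¹) (by rw [le_inv_comm₀ one_pos he]; linarith)
  rw [Real.log_inv] at h
  have h2 : (1-ε) * (-Real.log (1-ε)) ≤ (1-ε) * ((( 1-ε)⁻¹ - 1/(1-ε)⁻¹)/2) :=
    mul_le_mul_of_nonneg_left h he.le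
  have h3 : (1-ε) * (((1-ε)⁻¹ - 1/(1-ε)⁻¹)/2) = (1 - (1-ε)^2)/2 := by field_simp
  nlinarith

set_option maxHeartbeats 1000000 in
theorem chernoff_estimate_accuracy
    {Ω : Type*} [MeasurableSpace Ω] (μ : Measure Ω) [IsProbabilityMeasure μ]
    (ε δ B pfail : ℝ) (hε : ε ∈ Set.Ioc (0 : ℝ) 1) (hδ : 0 < δ) (hB : 0 < B)
    (hpfail : pfail ∈ Set.Ioo (0 : ℝ) 1)
    (c : ℝ) (hc : c = 3 * Real.log (2 / pfail))
    (w : ℕ) (hw : w = ⌈c * B / (ε ^ 2 * δ)⌉₊)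
    (X : Fin w → Ω → ℝ)
    (hmeas : ∀ i, Measurable (X i))
    (hindep : iIndepFun X μ)
    (hident : ∀ i j, IdentDistrib (X i) (X j) μ μ)
    (hbound : ∀ i ω, X i ω ∈ Set.Icc (0 : ℝ) B)
    (m : ℝ) (hm : ∀ i, m = ∫ ω, X i ω ∂μ) :
    μ {ω | |(∑ i, X i ω) / (w : ℝ) - m| > max (ε * m) (2 * Real.exp 1 * δ)}
      ≤ ENNReal.ofReal pfail := by
  obtain ⟨hε0, hε1⟩ := hε
  obtain ⟨hp0, hp1⟩ := hpfail
  have h2p : (1:ℝ) < 2 / pfail := by rw [lt_div_iff₀ hp0]; linarith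
  have hlog2p : 0 < Real.log (2/pfail) := Real.log_pos h2p
  have hc0 : 0 < c := by rw [hc]; linarith
  have hwr : c * B / (ε ^ 2 * δ) ≤ (w : ℝ) := hw ▸ Nat.le_ceil _
  have hwpos : 0 < w := by rw [hw]; exact Nat.ceil_pos.mpr (by positivity)
  have hwR : (0:ℝ) < w := by exact_mod_cast hwpos
  set S : Ω → ℝ := fun ω => ∑ i, X i ω with hSdef
  have hS0 : ∀ ω, 0 ≤ S ω := fun ω => Finset.sum_nonneg fun i _ => (hbound i ω).1
  have hSB : ∀ ω, S ω ≤ w * B := by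
    intro ω
    calc S ω ≤ ∑ _i : Fin w, B := Finset.sum_le_sum fun i _ => (hbound i ω).2
    _ = w * B := by simp [Finset.sum_const, Finset.card_univ, nsmul_eq_mul]
  -- integrability
  have hint : ∀ i, Integrable (X i) μ := by
    intro i
    refine Integrable.mono' (integrable_const B) (hmeas i).aestronglyMeasurable ?_
    refine ae_of_all _ fun ω => ?_
    rw [Real.norm_eq_abs, abs_le]
    exact ⟨by linarith [(hbound i ω).1, hB.le], (hbound i ω).2⟩
  have hintexp : ∀ (s : ℝ) i, Integrable (fun ω => Real.exp (s * X i ω)) μ := by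
    intro s i
    refine Integrable.mono' (integrable_const (Real.exp (|s| * B)))
      (((hmeas i).const_mul s).exp).aestronglyMeasurable (ae_of_all _ fun ω => ?_)
    rw [Real.norm_eq_abs, abs_of_pos (Real.exp_pos _), Real.exp_le_exp]
    calc s * X i ω ≤ |s| * X i ω :=
          mul_le_mul_of_nonneg_right (le_abs_self s) (hbound i ω).1
    _ ≤ |s| * B := mul_le_mul_of_nonneg_left (hbound i ω).2 (abs_nonneg s)
  have hintexpS : ∀ s : ℝ, Integrable (fun ω => Real.exp (s * S ω)) μ := by
    intro s
    have hSmeas : Measurable S := by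
      apply Finset.measurable_sum
      intro i _
      exact hmeas i
    refine Integrable.mono' (integrable_const (Real.exp (|s| * (w * B))))
      ((hSmeas.const_mul s).exp).aestronglyMeasurable (ae_of_all _ fun ω => ?_)
    rw [Real.norm_eq_abs, abs_of_pos (Real.exp_pos _), Real.exp_le_exp]
    calc s * S ω ≤ |s| * S ω := mul_le_mul_of_nonneg_right (le_abs_self s) (hS0 ω)
    _ ≤ |s| * (w * B) := mul_le_mul_of_nonneg_left (hSB ω) (abs_nonneg s)
  -- mean bounds
  have i0 : Fin w := ⟨0, hwpos⟩
  have hm0 : 0 ≤ m := by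
    rw [hm i0]; exact integral_nonneg fun ω => (hbound i0 ω).1
  have hmB : m ≤ B := by
    rw [hm i0]
    calc ∫ ω, X i0 ω ∂μ ≤ ∫ _ω, B ∂μ :=
      integral_mono (hint i0) (integrable_const B) (fun ω => (hbound i0 ω).2)
    _ = B := by simp
  -- mgf bound for one variable
  have hmgf : ∀ (s : ℝ) (i : Fin w),
      mgf (X i) μ s ≤ Real.exp (m / B * (Real.exp (s * B) - 1)) := by
    intro s i
    have hpt : ∀ ω, Real.exp (s * X i ω) ≤ 1 + X i ω / B * (Real.exp (s * B) - 1) := by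
      intro ω
      obtain ⟨h0, h1⟩ := hbound i ω
      have hb1 : X i ω / B ≤ 1 := div_le_one_of_le₀ h1 hB.le
      have hb0 : 0 ≤ X i ω / B := div_nonneg h0 hB.le
      have hcx := convexOn_exp.2 (Set.mem_univ (0:ℝ)) (Set.mem_univ (s * B))
        (show (0:ℝ) ≤ 1 - X i ω / B by linarith) hb0 (by ring)
      simp only [smul_eq_mul, mul_zero, zero_add, Real.exp_zero, mul_one] at hcx
      have hxx : X i ω / B * (s * B) = s * X i ω := by field_simp
      rw [hxx] at hcx
      linarith
    have hint2 : Integrable (fun ω => 1 + X i ω / B * (Real.exp (s * B) - 1)) μ :=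
      (integrable_const 1).add (((hint i).div_const B).mul_const _)
    calc mgf (X i) μ s = ∫ ω, Real.exp (s * X i ω) ∂μ := rfl
    _ ≤ ∫ ω, (1 + X i ω / B * (Real.exp (s * B) - 1)) ∂μ :=
        integral_mono (hintexp s i) hint2 hpt
    _ = 1 + m / B * (Real.exp (s * B) - 1) := by
        rw [integral_add (integrable_const 1) (((hint i).div_const B).mul_const _),
          integral_mul_const, integral_div, ← hm i]
        simp
    _ ≤ Real.exp (m / B * (Real.exp (s * B) - 1)) := by
        linarith [Real.add_one_le_exp (m / B * (Real.exp (s * B) - 1))]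
  -- mgf bound for the sum
  have hmgfS : ∀ s : ℝ,
      mgf S μ s ≤ Real.exp ((w : ℝ) * (m / B) * (Real.exp (s * B) - 1)) := by
    intro s
    have hSsum : S = ∑ i, X i := by funext ω; simp [hSdef]
    calc mgf S μ s = ∏ i, mgf (X i) μ s := by
          rw [hSsum, hindep.mgf_sum hmeas]
    _ ≤ ∏ _i : Fin w, Real.exp (m / B * (Real.exp (s * B) - 1)) :=
        Finset.prod_le_prod (fun i _ => mgf_nonneg) (fun i _ => hmgf s i)
    _ = Real.exp (m / B * (Real.exp (s * B) - 1)) ^ w := by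
        simp [Finset.prod_const, Finset.card_univ]
    _ = Real.exp ((w : ℝ) * (m / B) * (Real.exp (s * B) - 1)) := by
        rw [← Real.exp_nat_mul]; ring_nf
  -- Chernoff tails
  have tail_ge : ∀ s T : ℝ, 0 ≤ s → (μ {ω | T ≤ S ω}).toReal ≤
      Real.exp (-(s * T) + (w : ℝ) * (m / B) * (Real.exp (s * B) - 1)) := by
    intro s T hs
    calc (μ {ω | T ≤ S ω}).toReal ≤ Real.exp (-s * T) * mgf S μ s :=
      measure_ge_le_exp_mul_mgf T hs (hintexpS s)
    _ ≤ Real.exp (-s * T) * Real.exp ((w : ℝ) * (m / B) * (Real.exp (s * B) - 1)) :=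
        mul_le_mul_of_nonneg_left (hmgfS s) (Real.exp_pos _).le
    _ = _ := by rw [← Real.exp_add]; ring_nf
  have tail_le : ∀ s T : ℝ, s ≤ 0 → (μ {ω | S ω ≤ T}).toReal ≤
      Real.exp (-(s * T) + (w : ℝ) * (m / B) * (Real.exp (s * B) - 1)) := by
    intro s T hs
    calc (μ {ω | S ω ≤ T}).toReal ≤ Real.exp (-s * T) * mgf S μ s :=
      measure_le_le_exp_mul_mgf T hs (hintexpS s)
    _ ≤ Real.exp (-s * T) * Real.exp ((w : ℝ) * (m / B) * (Real.exp (s * B) - 1)) :=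
        mul_le_mul_of_nonneg_left (hmgfS s) (Real.exp_pos _).le
    _ = _ := by rw [← Real.exp_add]; ring_nf
  -- events and split
  set a : ℝ := max (ε * m) (2 * Real.exp 1 * δ) with hadef
  have ha1 : ε * m ≤ a := le_max_left _ _
  have ha2 : 2 * Real.exp 1 * δ ≤ a := le_max_right _ _
  have he1 : (2:ℝ) ≤ Real.exp 1 := by linarith [Real.add_one_le_exp (1:ℝ)]
  have hsplit : {ω | |(∑ i, X i ω) / (w : ℝ) - m| > a} ⊆
      {ω | (w : ℝ) * (m + a) ≤ S ω} ∪ {ω | S ω / (w : ℝ) < m - a} := by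
    intro ω hω
    simp only [Set.mem_setOf_eq, gt_iff_lt] at hω
    have hSω : (∑ i, X i ω) = S ω := rfl
    rw [hSω] at hω
    rcases lt_abs.mp hω with h | h
    · left
      have h2 : m + a < S ω / (w : ℝ) := by linarith
      have := (lt_div_iff₀ hwR).mp h2
      simp only [Set.mem_setOf_eq]
      linarith
    · right
      simp only [Set.mem_setOf_eq]
      linarith
  -- the two tail probabilities sum to at most pfail
  have key : (μ {ω | (w : ℝ) * (m + a) ≤ S ω}).toReal
      + (μ {ω | S ω / (w : ℝ) < m - a}).toReal ≤ pfail := by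
    have hlogp : Real.log (pfail / 2) = -(c / 3) := by
      rw [hc, show pfail / 2 = (2 / pfail)⁻¹ by field_simp, Real.log_inv]
      ring
    rcases le_or_gt δ m with hcase | hcase
    · -- m ≥ δ : relative error bound
      have hmpos : 0 < m := lt_of_lt_of_le hδ hcase
      have hwm : c * B / ε ^ 2 ≤ (w : ℝ) * m := by
        have e1 : c * B / (ε ^ 2 * δ) * δ ≤ (w : ℝ) * δ :=
          mul_le_mul_of_nonneg_right hwr hδ.le
        have e2 : c * B / (ε ^ 2 * δ) * δ = c * B / ε ^ 2 := by field_simp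
        have e3 : (w : ℝ) * δ ≤ (w : ℝ) * m := mul_le_mul_of_nonneg_left hcase hwR.le
        linarith
      -- upper tail
      have hupper : (μ {ω | (w : ℝ) * (m + a) ≤ S ω}).toReal ≤ pfail / 2 := by
        have hL : 0 ≤ Real.log (1 + ε) := Real.log_nonneg (by linarith)
        have hs : 0 ≤ Real.log (1 + ε) / B := div_nonneg hL hB.le
        have hup := tail_ge (Real.log (1 + ε) / B) ((w : ℝ) * (m + a)) hs
        rw [div_mul_cancel₀ _ hB.ne', Real.exp_log (by linarith : (0:ℝ) < 1 + ε)] at hup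
        have hexp : -(Real.log (1 + ε) / B * ((w : ℝ) * (m + a)))
            + (w : ℝ) * (m / B) * (1 + ε - 1) ≤ Real.log (pfail / 2) := by
          have hfrac : -(Real.log (1 + ε) / B * ((w : ℝ) * (m + a)))
              + (w : ℝ) * (m / B) * (1 + ε - 1)
              = ((w : ℝ) * m * ε - Real.log (1 + ε) * ((w : ℝ) * (m + a))) / B := by
            field_simp; ring
          rw [hfrac, hlogp, div_le_iff₀ hB]
          have hK := aux_K1 hε0.le hε1
          have f1 : (w : ℝ) * (m * (1 + ε)) ≤ (w : ℝ) * (m + a) :=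
            mul_le_mul_of_nonneg_left (by linarith) hwR.le
          have f2 : Real.log (1 + ε) * ((w : ℝ) * (m * (1 + ε)))
              ≤ Real.log (1 + ε) * ((w : ℝ) * (m + a)) :=
            mul_le_mul_of_nonneg_left f1 hL
          have f3 : (w : ℝ) * m * ε - Real.log (1 + ε) * ((w : ℝ) * (m * (1 + ε)))
              = ((w : ℝ) * m) * (ε - (1 + ε) * Real.log (1 + ε)) := by ring
          have f4 : ((w : ℝ) * m) * (ε - (1 + ε) * Real.log (1 + ε))
              ≤ ((w : ℝ) * m) * (-(ε ^ 2 / 3)) :=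
            mul_le_mul_of_nonneg_left hK (mul_nonneg hwR.le hm0)
          have f5 : ((w : ℝ) * m) * (-(ε ^ 2 / 3)) ≤ (c * B / ε ^ 2) * (-(ε ^ 2 / 3)) :=
            mul_le_mul_of_nonpos_right hwm (neg_nonpos.mpr (by positivity))
          have f6 : (c * B / ε ^ 2) * (-(ε ^ 2 / 3)) = -(c / 3) * B := by
            field_simp
          linarith
        calc (μ {ω | (w : ℝ) * (m + a) ≤ S ω}).toReal
            ≤ Real.exp (-(Real.log (1 + ε) / B * ((w : ℝ) * (m + a)))
              + (w : ℝ) * (m / B) * (1 + ε - 1)) := hup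
        _ ≤ Real.exp (Real.log (pfail / 2)) := Real.exp_le_exp.mpr hexp
        _ = pfail / 2 := Real.exp_log (by linarith)
      -- lower tail
      have hlower : (μ {ω | S ω / (w : ℝ) < m - a}).toReal ≤ pfail / 2 := by
        by_cases hma : m - a ≤ 0
        · have hempty : {ω | S ω / (w : ℝ) < m - a} = ∅ := by
            rw [Set.eq_empty_iff_forall_notMem]
            intro ω hω
            simp only [Set.mem_setOf_eq] at hω
            have := div_nonneg (hS0 ω) hwR.le
            linarith
          rw [hempty]
          simp [le_of_lt (half_pos hp0)]
        · push_neg at hma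
          have hε1' : ε < 1 := by
            by_contra hcon
            push_neg at hcon
            have : m ≤ ε * m := le_mul_of_one_le_left hm0 hcon
            linarith
          have hL' : Real.log (1 - ε) ≤ 0 := Real.log_nonpos (by linarith) (by linarith)
          have hsub : {ω | S ω / (w : ℝ) < m - a} ⊆ {ω | S ω ≤ (w : ℝ) * (m - a)} := by
            intro ω hω
            simp only [Set.mem_setOf_eq] at hω ⊢
            have := (div_lt_iff₀ hwR).mp hω
            linarith
          have hs : Real.log (1 - ε) / B ≤ 0 :=
            div_nonpos_of_nonpos_of_nonneg hL' hB.le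
          have hlo := tail_le (Real.log (1 - ε) / B) ((w : ℝ) * (m - a)) hs
          rw [div_mul_cancel₀ _ hB.ne',
            Real.exp_log (by linarith : (0:ℝ) < 1 - ε)] at hlo
          have hexp : -(Real.log (1 - ε) / B * ((w : ℝ) * (m - a)))
              + (w : ℝ) * (m / B) * (1 - ε - 1) ≤ Real.log (pfail / 2) := by
            have hfrac : -(Real.log (1 - ε) / B * ((w : ℝ) * (m - a)))
                + (w : ℝ) * (m / B) * (1 - ε - 1)
                = (-((w : ℝ) * m * ε) - Real.log (1 - ε) * ((w : ℝ) * (m - a))) / B := by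
              field_simp; ring
            rw [hfrac, hlogp, div_le_iff₀ hB]
            have hK := aux_K2 hε0.le hε1'
            have f1 : (w : ℝ) * (m - a) ≤ (w : ℝ) * (m * (1 - ε)) :=
              mul_le_mul_of_nonneg_left (by linarith) hwR.le
            have f2 : (-(Real.log (1 - ε))) * ((w : ℝ) * (m - a))
                ≤ (-(Real.log (1 - ε))) * ((w : ℝ) * (m * (1 - ε))) :=
              mul_le_mul_of_nonneg_left f1 (by linarith)
            have f3 : -((w : ℝ) * m * ε) - Real.log (1 - ε) * ((w : ℝ) * (m * (1 - ε)))
                = ((w : ℝ) * m) * (-((1 - ε) * Real.log (1 - ε)) - ε) := by ring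
            have f4 : ((w : ℝ) * m) * (-((1 - ε) * Real.log (1 - ε)) - ε)
                ≤ ((w : ℝ) * m) * (-(ε ^ 2 / 3)) :=
              mul_le_mul_of_nonneg_left hK (mul_nonneg hwR.le hm0)
            have f5 : ((w : ℝ) * m) * (-(ε ^ 2 / 3)) ≤ (c * B / ε ^ 2) * (-(ε ^ 2 / 3)) :=
              mul_le_mul_of_nonpos_right hwm (neg_nonpos.mpr (by positivity))
            have f6 : (c * B / ε ^ 2) * (-(ε ^ 2 / 3)) = -(c / 3) * B := by
              field_simp
            linarith
          calc (μ {ω | S ω / (w : ℝ) < m - a}).toReal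
              ≤ (μ {ω | S ω ≤ (w : ℝ) * (m - a)}).toReal :=
              ENNReal.toReal_mono (measure_ne_top μ _) (measure_mono hsub)
          _ ≤ Real.exp (-(Real.log (1 - ε) / B * ((w : ℝ) * (m - a)))
                + (w : ℝ) * (m / B) * (1 - ε - 1)) := hlo
          _ ≤ Real.exp (Real.log (pfail / 2)) := Real.exp_le_exp.mpr hexp
          _ = pfail / 2 := Real.exp_log (by linarith)
      linarith
    · -- m < δ : absolute error bound
      have hma : m - a < 0 := by
        have h4 := mul_le_mul_of_nonneg_right (by linarith : (4:ℝ) ≤ 2 * Real.exp 1) hδ.le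
        linarith
      have hempty : {ω | S ω / (w : ℝ) < m - a} = ∅ := by
        rw [Set.eq_empty_iff_forall_notMem]
        intro ω hω
        simp only [Set.mem_setOf_eq] at hω
        have := div_nonneg (hS0 ω) hwR.le
        linarith
      have hwδ : c * B / ε ^ 2 ≤ (w : ℝ) * δ := by
        have e1 : c * B / (ε ^ 2 * δ) * δ ≤ (w : ℝ) * δ :=
          mul_le_mul_of_nonneg_right hwr hδ.le
        have e2 : c * B / (ε ^ 2 * δ) * δ = c * B / ε ^ 2 := by field_simp
        linarith
      have hwδ' : c * B ≤ (w : ℝ) * δ := by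
        have hε2 : ε ^ 2 ≤ 1 := by nlinarith
        have : c * B ≤ c * B / ε ^ 2 := by
          rw [le_div_iff₀ (by positivity)]
          have := mul_le_mul_of_nonneg_left hε2 (mul_nonneg hc0.le hB.le)
          linarith
        linarith
      have hupper : (μ {ω | (w : ℝ) * (m + a) ≤ S ω}).toReal ≤ pfail := by
        have hs : (0:ℝ) ≤ 1 / B := by positivity
        have hup := tail_ge (1 / B) ((w : ℝ) * (m + a)) hs
        rw [div_mul_cancel₀ _ hB.ne'] at hup
        have hexp : -(1 / B * ((w : ℝ) * (m + a)))
            + (w : ℝ) * (m / B) * (Real.exp 1 - 1) ≤ Real.log pfail := by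
          have hfrac : -(1 / B * ((w : ℝ) * (m + a)))
              + (w : ℝ) * (m / B) * (Real.exp 1 - 1)
              = (-((w : ℝ) * (m + a)) + (w : ℝ) * m * (Real.exp 1 - 1)) / B := by
            field_simp
          rw [hfrac, div_le_iff₀ hB]
          have hlog2 : (0:ℝ) ≤ Real.log 2 := Real.log_nonneg one_le_two
          have hclog : Real.log (2 / pfail) = Real.log 2 - Real.log pfail :=
            Real.log_div two_ne_zero hp0.ne'
          have g1 : (w : ℝ) * (2 * Real.exp 1 * δ) ≤ (w : ℝ) * (m + a) :=
            mul_le_mul_of_nonneg_left (by linarith) hwR.le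
          have g2 : (w : ℝ) * m * (Real.exp 1 - 1) ≤ (w : ℝ) * δ * (Real.exp 1 - 1) := by
            have : (w : ℝ) * m ≤ (w : ℝ) * δ := mul_le_mul_of_nonneg_left hcase.le hwR.le
            exact mul_le_mul_of_nonneg_right this (by linarith)
          have g3 : -((w : ℝ) * (m + a)) + (w : ℝ) * m * (Real.exp 1 - 1)
              ≤ -((w : ℝ) * δ) * (Real.exp 1 + 1) := by linarith
          have g4a : ((w : ℝ) * δ) * 3 ≤ ((w : ℝ) * δ) * (Real.exp 1 + 1) :=
            mul_le_mul_of_nonneg_left (by linarith) (by positivity)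
          have g4 : -((w : ℝ) * δ) * (Real.exp 1 + 1) ≤ -(c * B) * 3 := by linarith
          have g5 : -(c * B) * 3 ≤ Real.log pfail * B := by
            have hlp : -(Real.log pfail) ≤ c := by rw [hc, hclog]; linarith
            have h1 : (-c) * B ≤ Real.log pfail * B :=
              mul_le_mul_of_nonneg_right (by linarith) hB.le
            have h2 : 0 ≤ c * B := mul_nonneg hc0.le hB.le
            linarith
          linarith
        calc (μ {ω | (w : ℝ) * (m + a) ≤ S ω}).toReal
            ≤ Real.exp (-(1 / B * ((w : ℝ) * (m + a)))
              + (w : ℝ) * (m / B) * (Real.exp 1 - 1)) := hup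
        _ ≤ Real.exp (Real.log pfail) := Real.exp_le_exp.mpr hexp
        _ = pfail := Real.exp_log hp0
      rw [hempty]
      simpa using hupper
  -- conclude
  calc μ {ω | |(∑ i, X i ω) / (w : ℝ) - m| > a}
      ≤ μ ({ω | (w : ℝ) * (m + a) ≤ S ω} ∪ {ω | S ω / (w : ℝ) < m - a}) :=
      measure_mono hsplit
  _ ≤ μ {ω | (w : ℝ) * (m + a) ≤ S ω} + μ {ω | S ω / (w : ℝ) < m - a} :=
      measure_union_le _ _
  _ ≤ ENNReal.ofReal pfail := by
      rw [← ENNReal.ofReal_toReal (measure_ne_top μ {ω | (w : ℝ) * (m + a) ≤ S ω}),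
        ← ENNReal.ofReal_toReal (measure_ne_top μ {ω | S ω / (w : ℝ) < m - a}),
        ← ENNReal.ofReal_add ENNReal.toReal_nonneg ENNReal.toReal_nonneg]
      exact ENNReal.ofReal_le_ofReal key
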